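/- arXiv:2010.14857 — 3 statements merged into one kernel-verified Lean document; each statement's English description precedes it below -/
import Mathlib

section
/- The intrinsic frontier of ℋ, namely {A ∈ ℋ : det A = 0}, equals the union, taken over all Hermitian matrices P ∈ HM(3) with P·P = P and tr P = 2 (rank-two orthogonal projections), of the sets {A ∈ HM(3) : A positive semidefinite, tr A = 1, P·A = A}; i.e. the boundary of ℋ is the union of the unit 3-balls enclosed by the complex projective lines of CP². -/
open Matrix ComplexOrder

/-- The intrinsic frontier `{A ∈ ℋ : det A = 0}` of `ℋ` is the union, over all rank-two
Hermitian orthogonal projections `P` (`P·P = P`, `tr P = 2`), of the unit 3-balls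
`{A : A.PosSemidef, tr A = 1, P·A = A}` enclosed by the complex projective lines of `CP²`. -/
theorem frontier_H_eq_union_balls :
    {A : Matrix (Fin 3) (Fin 3) ℂ | (A.PosSemidef ∧ A.trace = 1) ∧ A.det = 0} =
      ⋃ P ∈ {P : Matrix (Fin 3) (Fin 3) ℂ | P.IsHermitian ∧ P * P = P ∧ P.trace = 2},
        {A : Matrix (Fin 3) (Fin 3) ℂ | A.PosSemidef ∧ A.trace = 1 ∧ P * A = A} := by
  ext A
  simp only [Set.mem_setOf_eq, Set.mem_iUnion, exists_prop]
  constructor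
  · rintro ⟨⟨hA, htr⟩, hdet⟩
    obtain ⟨v, hv, hAv⟩ := Matrix.exists_mulVec_eq_zero_iff.mpr hdet
    set t : ℝ := ∑ i, Complex.normSq (v i) with ht
    have htpos : 0 < t := by
      obtain ⟨i, hi⟩ := Function.ne_iff.mp hv
      exact Finset.sum_pos' (fun j _ => Complex.normSq_nonneg _)
        ⟨i, Finset.mem_univ i, Complex.normSq_pos.mpr hi⟩
    set s : ℝ := Real.sqrt t with hs
    have hspos : 0 < s := Real.sqrt_pos.mpr htpos
    set w : Fin 3 → ℂ := fun i => ((s : ℂ))⁻¹ * v i with hw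
    have hAw : A *ᵥ w = 0 := by
      have : A *ᵥ w = ((s : ℂ))⁻¹ • (A *ᵥ v) := by
        rw [← mulVec_smul]; rfl
      rw [this, hAv, smul_zero]
    have hnorm : ∑ k, (starRingEnd ℂ) (w k) * w k = 1 := by
      have h1 : ∀ k, (starRingEnd ℂ) (w k) * w k = (Complex.normSq (w k) : ℂ) :=
        fun k => (Complex.normSq_eq_conj_mul_self).symm
      rw [Finset.sum_congr rfl (fun k _ => h1 k), ← Complex.ofReal_sum]
      norm_cast
      have h2 : ∀ k, Complex.normSq (w k) = t⁻¹ * Complex.normSq (v k) := by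
        intro k
        simp only [hw, Complex.normSq_mul, Complex.normSq_inv, Complex.normSq_ofReal]
        rw [hs, Real.mul_self_sqrt htpos.le]
      rw [Finset.sum_congr rfl (fun k _ => h2 k), ← Finset.mul_sum, ← ht,
        inv_mul_cancel₀ htpos.ne']
    set M : Matrix (Fin 3) (Fin 3) ℂ := vecMulVec w (star w) with hM
    have hMapp : ∀ i j, M i j = w i * (starRingEnd ℂ) (w j) := fun i j => by
      simp [hM, vecMulVec_apply]
    have hMH : M.IsHermitian := by
      ext i j
      simp only [conjTranspose_apply, hMapp, star_mul', RCLike.star_def, _root_.map_mul, Complex.conj_conj]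
      ring
    have hMM : M * M = M := by
      ext i j
      rw [mul_apply, hMapp]
      calc ∑ k, M i k * M k j
          = (∑ k, (starRingEnd ℂ) (w k) * w k) * (w i * (starRingEnd ℂ) (w j)) := by
            rw [Finset.sum_mul]
            exact Finset.sum_congr rfl fun k _ => by rw [hMapp, hMapp]; ring
        _ = w i * (starRingEnd ℂ) (w j) := by rw [hnorm, one_mul]
    have htrM : M.trace = 1 := by
      rw [trace, ← hnorm]
      exact Finset.sum_congr rfl fun i _ => by rw [diag_apply, hMapp]; ring
    have hwA : star w ᵥ* A = 0 := by
      rw [← hA.isHermitian.eq, ← star_mulVec, hAw, star_zero]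
    have hMA : M * A = 0 := by
      ext i j
      rw [mul_apply, Matrix.zero_apply]
      have : ∑ k, M i k * A k j = w i * (star w ᵥ* A) j := by
        simp only [vecMul, dotProduct, Pi.star_apply, RCLike.star_def, Finset.mul_sum]
        exact Finset.sum_congr rfl fun k _ => by rw [hMapp]; ring
      rw [this, hwA, Pi.zero_apply, mul_zero]
    refine ⟨1 - M, ⟨?_, ?_, ?_⟩, hA, htr, ?_⟩
    · exact (isHermitian_one).sub hMH
    · rw [sub_mul, mul_sub, mul_sub, one_mul, mul_one, hMM]; simp
    · rw [trace_sub, trace_one, htrM]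
      simp
      norm_num
    · rw [sub_mul, one_mul, hMA, sub_zero]
  · rintro ⟨P, ⟨hPH, hPP, hPtr⟩, hA, htr, hPA⟩
    refine ⟨⟨hA, htr⟩, ?_⟩
    by_contra hdet
    have hdP : P.det * A.det = A.det := by rw [← det_mul, hPA]
    have hdP1 : P.det ≠ 0 := by
      intro h
      rw [h, zero_mul] at hdP
      exact hdet hdP.symm
    have hPunit : IsUnit P := (Matrix.isUnit_iff_isUnit_det P).mpr hdP1.isUnit
    have hP1 : P = 1 := by
      have hinv := Matrix.nonsing_inv_mul P hdP1.isUnit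
      calc P = (P⁻¹ * P) * P := by rw [hinv, one_mul]
        _ = P⁻¹ * (P * P) := by rw [mul_assoc]
        _ = P⁻¹ * P := by rw [hPP]
        _ = 1 := hinv
    rw [hP1, trace_one] at hPtr
    simp at hPtr
end

section
/- Every positive semidefinite 3×3 complex Hermitian matrix Q with tr Q = 1 and det Q = 0 satisfies 2 tr((Q − (1/3)I)²) ≥ 1/3, and equality is attained (for instance by Q = diag(0, 1/2, 1/2)). Consequently, in the Euclidean norm ‖X‖² = 2 tr(X²) on HM(3), the distance from the point (1/3)I to the intrinsic frontier of ℋ equals √3/3. -/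
open Matrix ComplexOrder

lemma spec3 (Q : Matrix (Fin 3) (Fin 3) ℂ) (hQ : Q.PosSemidef) :
    ∃ f : Fin 3 → ℝ, (∀ i, 0 ≤ f i) ∧ Q.trace = ∑ i, (f i : ℂ) ∧
      Q.det = ∏ i, (f i : ℂ) ∧ (Q ^ 2).trace = ∑ i, ((f i : ℂ)) ^ 2 := by
  refine ⟨hQ.1.eigenvalues, hQ.eigenvalues_nonneg, ?_, hQ.1.det_eq_prod_eigenvalues, ?_⟩
  · conv_lhs => rw [hQ.1.spectral_theorem, Unitary.conjStarAlgAut_apply]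
    rw [Matrix.trace_mul_cycle]
    simp [Matrix.trace_diagonal]
  · have h2 : Q ^ 2 = (hQ.1.eigenvectorUnitary : Matrix (Fin 3) (Fin 3) ℂ) *
        diagonal ((↑) ∘ hQ.1.eigenvalues) ^ 2 * (star (hQ.1.eigenvectorUnitary : Matrix (Fin 3) (Fin 3) ℂ)) := by
      conv_lhs => rw [hQ.1.spectral_theorem, Unitary.conjStarAlgAut_apply]
      rw [pow_two, pow_two]
      have h1 : (star (hQ.1.eigenvectorUnitary : Matrix (Fin 3) (Fin 3) ℂ)) *
          (hQ.1.eigenvectorUnitary : Matrix (Fin 3) (Fin 3) ℂ) = 1 := by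
        exact Unitary.coe_star_mul_self _
      rw [Matrix.mul_assoc, Matrix.mul_assoc, Matrix.mul_assoc]
      rw [← Matrix.mul_assoc (star _) _, h1, Matrix.one_mul]
      noncomm_ring
    rw [h2, Matrix.trace_mul_cycle]
    simp [Matrix.trace_diagonal, diagonal_pow]

lemma texp (Q : Matrix (Fin 3) (Fin 3) ℂ) (c : ℂ) :
    ((Q - c • 1) ^ 2).trace = (Q ^ 2).trace - 2 * c * Q.trace + 3 * c ^ 2 := by
  have h : (Q - c • 1) ^ 2 = Q ^ 2 - c • Q - c • Q + (c * c) • 1 := by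
    simp only [pow_two, sub_mul, Matrix.mul_sub, Matrix.smul_mul, Matrix.mul_smul, smul_smul,
      Matrix.mul_one, Matrix.one_mul]
    abel
  rw [h]
  simp [Matrix.trace_add, Matrix.trace_sub, Matrix.trace_smul, Matrix.trace_one, smul_eq_mul]
  ring

lemma lbd (Q : Matrix (Fin 3) (Fin 3) ℂ) (hQ : Q.PosSemidef) (htr : Q.trace = 1)
    (hdet : Q.det = 0) :
    (2 * (((Q - (1/3 : ℂ) • 1) ^ 2).trace)).re ≥ 1/3 := by
  obtain ⟨f, hf0, hft, hfd, hfs⟩ := spec3 Q hQ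
  have hsum : f 0 + f 1 + f 2 = 1 := by
    have : ((f 0 + f 1 + f 2 : ℝ) : ℂ) = 1 := by
      push_cast
      rw [← Fin.sum_univ_three (fun i => (f i : ℂ)), ← hft, htr]
    exact_mod_cast this
  have hprod : f 0 * (f 1 * f 2) = 0 := by
    have : ((f 0 * (f 1 * f 2) : ℝ) : ℂ) = 0 := by
      push_cast
      rw [← mul_assoc, ← Fin.prod_univ_three (fun i => (f i : ℂ)), ← hfd, hdet]
    exact_mod_cast this
  have hsq : f 0 ^ 2 + f 1 ^ 2 + f 2 ^ 2 ≥ 1/2 := by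
    rcases mul_eq_zero.mp hprod with h | h
    · nlinarith [sq_nonneg (f 1 - f 2), sq_nonneg (f 0)]
    · rcases mul_eq_zero.mp h with h' | h'
      · nlinarith [sq_nonneg (f 0 - f 2), sq_nonneg (f 1)]
      · nlinarith [sq_nonneg (f 0 - f 1), sq_nonneg (f 2)]
  have hre : (2 * (((Q - (1/3 : ℂ) • 1) ^ 2).trace)).re
      = 2 * (f 0 ^ 2 + f 1 ^ 2 + f 2 ^ 2) - 2/3 := by
    rw [texp, hfs, htr]
    have hcast : (∑ i, ((f i : ℂ)) ^ 2) = ((f 0 ^ 2 + f 1 ^ 2 + f 2 ^ 2 : ℝ) : ℂ) := by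
      rw [Fin.sum_univ_three]
      push_cast
      ring
    rw [hcast]
    have h2 : (((2:ℕ):ℂ) * (((f 0 ^ 2 + f 1 ^ 2 + f 2 ^ 2 : ℝ) : ℂ) - 2 * (1/3 : ℂ) * 1 + 3 * (1/3 : ℂ) ^ 2))
        = ((2 * (f 0 ^ 2 + f 1 ^ 2 + f 2 ^ 2) - 2/3 : ℝ) : ℂ) := by
      push_cast
      ring
    rw [h2, Complex.ofReal_re]
  rw [hre]; linarith

lemma diagvals :
    (Matrix.diagonal ![0, 1/2, 1/2] : Matrix (Fin 3) (Fin 3) ℂ).PosSemidef ∧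
      (Matrix.diagonal ![0, 1/2, 1/2] : Matrix (Fin 3) (Fin 3) ℂ).trace = 1 ∧
      (Matrix.diagonal ![0, 1/2, 1/2] : Matrix (Fin 3) (Fin 3) ℂ).det = 0 ∧
      (2 * ((((Matrix.diagonal ![0, 1/2, 1/2] : Matrix (Fin 3) (Fin 3) ℂ) -
        (1/3 : ℂ) • 1) ^ 2).trace)).re = 1/3 := by
  refine ⟨Matrix.PosSemidef.diagonal ?_, ?_, ?_, ?_⟩
  · intro i
    fin_cases i <;> simp [Complex.le_def]
  · simp [Matrix.trace_diagonal, Fin.sum_univ_three]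
    norm_num
  · simp [Matrix.det_diagonal, Fin.prod_univ_three]
  · rw [texp]
    norm_num [pow_two, Matrix.diagonal_mul_diagonal, Matrix.trace_diagonal, Fin.sum_univ_three, Matrix.cons_val_two, Matrix.vecHead, Matrix.vecTail]

lemma sqrt_third : Real.sqrt (1/3) = Real.sqrt 3 / 3 := by
  rw [show (1/3 : ℝ) = (Real.sqrt 3 / 3) ^ 2 by
    rw [div_pow, Real.sq_sqrt] <;> norm_num]
  exact Real.sqrt_sq (by positivity)

/-- Every positive semidefinite 3×3 complex Hermitian matrix `Q` with `tr Q = 1` and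
`det Q = 0` satisfies `2 tr((Q − (1/3)I)²) ≥ 1/3`, equality being attained by
`Q = diag(0, 1/2, 1/2)`.  Consequently, in the Euclidean norm `‖X‖² = 2 tr(X²)` on the
Hermitian matrices, the distance from `(1/3)I` to the intrinsic frontier of `ℋ`
equals `√3/3` (stated as: `√3/3` is the least value of the distance function). -/
theorem dist_center_to_frontier :
    (∀ Q : Matrix (Fin 3) (Fin 3) ℂ, Q.PosSemidef → Q.trace = 1 → Q.det = 0 →
      (2 * (((Q - (1/3 : ℂ) • 1) ^ 2).trace)).re ≥ 1/3) ∧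
    ((Matrix.diagonal ![0, 1/2, 1/2] : Matrix (Fin 3) (Fin 3) ℂ).PosSemidef ∧
      (Matrix.diagonal ![0, 1/2, 1/2] : Matrix (Fin 3) (Fin 3) ℂ).trace = 1 ∧
      (Matrix.diagonal ![0, 1/2, 1/2] : Matrix (Fin 3) (Fin 3) ℂ).det = 0 ∧
      (2 * ((((Matrix.diagonal ![0, 1/2, 1/2] : Matrix (Fin 3) (Fin 3) ℂ) -
        (1/3 : ℂ) • 1) ^ 2).trace)).re = 1/3) ∧
    IsLeast {d : ℝ | ∃ Q : Matrix (Fin 3) (Fin 3) ℂ,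
        Q.PosSemidef ∧ Q.trace = 1 ∧ Q.det = 0 ∧
        d = Real.sqrt ((2 * (((Q - (1/3 : ℂ) • 1) ^ 2).trace)).re)}
      (Real.sqrt 3 / 3) := by
  obtain ⟨hpsd, htr, hdet, hval⟩ := diagvals
  refine ⟨lbd, ⟨hpsd, htr, hdet, hval⟩, ?_, ?_⟩
  · exact ⟨_, hpsd, htr, hdet, by rw [hval, show (1/3 : ℝ) = 1/3 from rfl, sqrt_third]⟩
  · rintro d ⟨Q, h1, h2, h3, rfl⟩
    rw [← sqrt_third]
    exact Real.sqrt_le_sqrt (lbd Q h1 h2 h3)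
end

section
/- For every real number a one has 3a² − 3a + 1 > 0 and 24·(7a² − 4a + 1)/(3a² − 3a + 1) ≥ 16·(4 − √7), with equality if and only if a = (4 − √7)/9. Equivalently, the function F(a) = 24π·(7a² − 4a + 1)/(3a² − 3a + 1) attains its minimum over ℝ exactly at a₁ = (4 − √7)/9, and F(a₁) = 16(4 − √7)π. -/
/-- For every real `a` one has `3a² − 3a + 1 > 0` and
`24·(7a² − 4a + 1)/(3a² − 3a + 1) ≥ 16·(4 − √7)`, with equality iff `a = (4 − √7)/9`.
Equivalently, `F(a) = 24π·(7a² − 4a + 1)/(3a² − 3a + 1)` attains its minimum over `ℝ`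
exactly at `a₁ = (4 − √7)/9`, with `F(a₁) = 16(4 − √7)π`. -/
theorem claim_minimum_F :
    (∀ a : ℝ, 3 * a ^ 2 - 3 * a + 1 > 0) ∧
    (∀ a : ℝ, 24 * (7 * a ^ 2 - 4 * a + 1) / (3 * a ^ 2 - 3 * a + 1) ≥
      16 * (4 - Real.sqrt 7)) ∧
    (∀ a : ℝ, 24 * (7 * a ^ 2 - 4 * a + 1) / (3 * a ^ 2 - 3 * a + 1) =
        16 * (4 - Real.sqrt 7) ↔ a = (4 - Real.sqrt 7) / 9) ∧
    (∀ a : ℝ,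
      24 * Real.pi * (7 * a ^ 2 - 4 * a + 1) / (3 * a ^ 2 - 3 * a + 1) ≥
        16 * (4 - Real.sqrt 7) * Real.pi) ∧
    (∀ a : ℝ,
      24 * Real.pi * (7 * a ^ 2 - 4 * a + 1) / (3 * a ^ 2 - 3 * a + 1) =
          16 * (4 - Real.sqrt 7) * Real.pi ↔ a = (4 - Real.sqrt 7) / 9) := by
  set s := Real.sqrt 7 with hsdef
  have hs : s ^ 2 = 7 := Real.sq_sqrt (by norm_num)
  have hs2 : (2:ℝ) < s := by nlinarith [Real.sqrt_nonneg 7]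
  have hden : ∀ a : ℝ, 3 * a ^ 2 - 3 * a + 1 > 0 := by
    intro a; nlinarith [sq_nonneg (2*a - 1)]
  have key : ∀ a : ℝ, 24 * (7 * a ^ 2 - 4 * a + 1)
      - 16 * (4 - s) * (3 * a ^ 2 - 3 * a + 1)
      = (48 * s - 24) * (a - (4 - s) / 9) ^ 2 := by
    intro a
    linear_combination ((-48*s - 864*a + 408)/81) * hs
  have h48 : (0:ℝ) < 48 * s - 24 := by linarith
  have h2 : ∀ a : ℝ, 24 * (7 * a ^ 2 - 4 * a + 1) / (3 * a ^ 2 - 3 * a + 1) ≥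
      16 * (4 - s) := by
    intro a
    rw [ge_iff_le, le_div_iff₀ (hden a)]
    nlinarith [key a, mul_nonneg h48.le (sq_nonneg (a - (4 - s) / 9))]
  have h3 : ∀ a : ℝ, 24 * (7 * a ^ 2 - 4 * a + 1) / (3 * a ^ 2 - 3 * a + 1) =
      16 * (4 - s) ↔ a = (4 - s) / 9 := by
    intro a
    rw [div_eq_iff (hden a).ne']
    constructor
    · intro h
      have h0 : (48 * s - 24) * (a - (4 - s) / 9) ^ 2 = 0 := by
        linarith [key a]
      have := (mul_eq_zero.mp h0).resolve_left h48.ne'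
      have := pow_eq_zero_iff (n := 2) (by norm_num) |>.mp this
      linarith
    · intro h
      subst h
      linear_combination key ((4 - s) / 9)
  refine ⟨hden, h2, h3, ?_, ?_⟩
  · intro a
    have e1 : 24 * Real.pi * (7 * a ^ 2 - 4 * a + 1) / (3 * a ^ 2 - 3 * a + 1)
        = Real.pi * (24 * (7 * a ^ 2 - 4 * a + 1) / (3 * a ^ 2 - 3 * a + 1)) := by
      ring
    rw [e1, ge_iff_le, show 16 * (4 - s) * Real.pi = Real.pi * (16 * (4 - s)) by ring]
    exact mul_le_mul_of_nonneg_left (h2 a) Real.pi_pos.le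
  · intro a
    have e1 : 24 * Real.pi * (7 * a ^ 2 - 4 * a + 1) / (3 * a ^ 2 - 3 * a + 1)
        = Real.pi * (24 * (7 * a ^ 2 - 4 * a + 1) / (3 * a ^ 2 - 3 * a + 1)) := by
      ring
    rw [e1, show 16 * (4 - s) * Real.pi = Real.pi * (16 * (4 - s)) by ring,
      mul_right_inj' Real.pi_ne_zero]
    exact h3 a
end
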